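/- arXiv:2503.08942 — 2 statements merged into one kernel-verified Lean document; each statement's English description precedes it below -/
import Mathlib

section
/- Under exact EGPO updates with learning rate η satisfying 0 < η ≤ 1/(β+3), for every t ≥ 0 one has KL(π*_β ‖ π^{(t+1)}) ≤ (1 − ηβ) · KL(π*_β ‖ π^{(t)}). -/
open Real

/-- Tabular softmax policy. -/
noncomputable def softmax {Y : Type*} [Fintype Y] (θ : Y → ℝ) : Y → ℝ :=
  fun y => Real.exp (θ y) / ∑ y', Real.exp (θ y')

/-- Kullback–Leibler divergence between distributions on a finite set. -/
noncomputable def KLdiv {Y : Type*} [Fintype Y] (p q : Y → ℝ) : ℝ :=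
  ∑ y, p y * Real.log (p y / q y)

/-- `(P π)(y) = ∑ y' P(y, y') π(y')`. -/
noncomputable def matVec {Y : Type*} [Fintype Y] (P : Y → Y → ℝ) (p : Y → ℝ) : Y → ℝ :=
  fun y => ∑ y', P y y' * p y'

section Aux
variable {Y : Type*} [Fintype Y]

lemma sum_exp_pos [Nonempty Y] (θ : Y → ℝ) : 0 < ∑ y, Real.exp (θ y) :=
  Finset.sum_pos (fun y _ => Real.exp_pos _) Finset.univ_nonempty

lemma softmax_pos [Nonempty Y] (θ : Y → ℝ) (y : Y) : 0 < softmax θ y :=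
  div_pos (Real.exp_pos _) (sum_exp_pos θ)

lemma softmax_sum [Nonempty Y] (θ : Y → ℝ) : ∑ y, softmax θ y = 1 := by
  simp only [softmax]
  rw [← Finset.sum_div]
  exact div_self (sum_exp_pos θ).ne'

lemma log_softmax [Nonempty Y] (θ : Y → ℝ) (y : Y) :
    Real.log (softmax θ y) = θ y - Real.log (∑ y', Real.exp (θ y')) := by
  rw [softmax, Real.log_div (Real.exp_ne_zero _) (sum_exp_pos θ).ne', Real.log_exp]

lemma KL_eq [Nonempty Y] (a b : Y → ℝ) :
    KLdiv (softmax a) (softmax b)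
      = (∑ y, softmax a y * (a y - b y))
        + (Real.log (∑ y, Real.exp (b y)) - Real.log (∑ y, Real.exp (a y))) := by
  have key : ∀ y, softmax a y * Real.log (softmax a y / softmax b y)
      = softmax a y * (a y - b y)
        + softmax a y * (Real.log (∑ y', Real.exp (b y')) - Real.log (∑ y', Real.exp (a y'))) := by
    intro y
    rw [Real.log_div (softmax_pos a y).ne' (softmax_pos b y).ne', log_softmax, log_softmax]
    ring
  rw [KLdiv]
  rw [Finset.sum_congr rfl (fun y _ => key y), Finset.sum_add_distrib, ← Finset.sum_mul,
    softmax_sum, one_mul]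

lemma skew (P : Y → Y → ℝ) (hPsum : ∀ y y', P y y' + P y' y = 1)
    (v : Y → ℝ) (hv : ∑ y, v y = 0) :
    ∑ y, v y * matVec P v y = 0 := by
  have h2 : (∑ y, v y * matVec P v y) + (∑ y, v y * matVec P v y)
      = (∑ y, v y) * (∑ y, v y) := by
    have e1 : ∀ y, v y * matVec P v y = ∑ y', v y * (P y y' * v y') := by
      intro y; rw [matVec, Finset.mul_sum]
    rw [Finset.sum_congr rfl (fun y _ => e1 y)]
    nth_rewrite 2 [Finset.sum_comm]
    rw [← Finset.sum_add_distrib]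
    rw [Finset.sum_mul]
    refine Finset.sum_congr rfl (fun y _ => ?_)
    rw [← Finset.sum_add_distrib, Finset.mul_sum]
    refine Finset.sum_congr rfl (fun y' _ => ?_)
    linear_combination (v y * v y') * hPsum y y'
  rw [hv] at h2
  linarith

lemma matVec_diff_bound (P : Y → Y → ℝ) (hP0 : ∀ y y', 0 ≤ P y y') (hP1 : ∀ y y', P y y' ≤ 1)
    (p q : Y → ℝ) (hpq : ∑ y, p y = ∑ y, q y) (y : Y) :
    |matVec P p y - matVec P q y| ≤ (∑ y', |p y' - q y'|) / 2 := by
  have expand : matVec P p y - matVec P q y = ∑ y', (P y y' - 1/2) * (p y' - q y') := by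
    rw [matVec, matVec]
    have : ∀ y', (P y y' - 1/2) * (p y' - q y')
        = (P y y' * p y' - P y y' * q y') - (1/2) * (p y' - q y') := by intro y'; ring
    rw [Finset.sum_congr rfl (fun y' _ => this y'), Finset.sum_sub_distrib,
      Finset.sum_sub_distrib, ← Finset.mul_sum, Finset.sum_sub_distrib, hpq]
    ring
  rw [expand]
  calc |∑ y', (P y y' - 1/2) * (p y' - q y')| ≤ ∑ y', |(P y y' - 1/2) * (p y' - q y')| :=
        Finset.abs_sum_le_sum_abs _ _
    _ ≤ ∑ y', (1/2) * |p y' - q y'| := by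
        refine Finset.sum_le_sum (fun y' _ => ?_)
        rw [abs_mul]
        refine mul_le_mul_of_nonneg_right ?_ (abs_nonneg _)
        rw [abs_le]
        constructor <;> nlinarith [hP0 y y', hP1 y y']
    _ = (∑ y', |p y' - q y'|) / 2 := by rw [← Finset.mul_sum]; ring

lemma log_ineq {x y : ℝ} (hx : 0 < x) (hy : 0 < y) :
    (x - y)^2 / (2*(x+y)) ≤ x * Real.log (x/y) - x + y := by
  set m : ℝ := (x+y)/2 with hm
  have hm0 : 0 < m := by rw [hm]; positivity
  have h1 : 1 - m/x ≤ Real.log (x/m) := by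
    have h := Real.log_le_sub_one_of_pos (show 0 < m/x by positivity)
    rw [Real.log_div hm0.ne' hx.ne'] at h
    rw [Real.log_div hx.ne' hm0.ne']
    linarith
  have h2 : 1 - y/m ≤ Real.log (m/y) := by
    have h := Real.log_le_sub_one_of_pos (show 0 < y/m by positivity)
    rw [Real.log_div hy.ne' hm0.ne'] at h
    rw [Real.log_div hm0.ne' hy.ne']
    linarith
  have h3 : Real.log (x/y) = Real.log (x/m) + Real.log (m/y) := by
    rw [Real.log_div hx.ne' hy.ne', Real.log_div hx.ne' hm0.ne', Real.log_div hm0.ne' hy.ne']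
    ring
  have h4 : x * ((1 - m/x) + (1 - y/m)) ≤ x * Real.log (x/y) := by
    rw [h3]; exact mul_le_mul_of_nonneg_left (by linarith) hx.le
  have h5 : x * ((1 - m/x) + (1 - y/m)) - x + y = (x - y)^2 / (2*(x+y)) := by
    rw [hm]; field_simp; ring
  linarith

lemma pinsker4 (p q : Y → ℝ) (hp : ∀ y, 0 < p y) (hq : ∀ y, 0 < q y)
    (hp1 : ∑ y, p y = 1) (hq1 : ∑ y, q y = 1) :
    (∑ y, |p y - q y|)^2 ≤ 4 * KLdiv p q := by
  have hCS : (∑ y, |p y - q y|)^2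
      ≤ (∑ y, (p y - q y)^2 / (p y + q y)) * (∑ y, (p y + q y)) := by
    have h := Finset.sum_mul_sq_le_sq_mul_sq Finset.univ
      (fun y => |p y - q y| / Real.sqrt (p y + q y)) (fun y => Real.sqrt (p y + q y))
    have e1 : ∀ y : Y, |p y - q y| / Real.sqrt (p y + q y) * Real.sqrt (p y + q y)
        = |p y - q y| := by
      intro y
      rw [div_mul_cancel₀]
      exact (Real.sqrt_pos.mpr (by nlinarith [hp y, hq y])).ne'
    have e2 : ∀ y : Y, (|p y - q y| / Real.sqrt (p y + q y))^2
        = (p y - q y)^2 / (p y + q y) := by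
      intro y
      rw [div_pow, sq_abs, Real.sq_sqrt (by nlinarith [hp y, hq y] : (0:ℝ) ≤ p y + q y)]
    have e3 : ∀ y : Y, (Real.sqrt (p y + q y))^2 = p y + q y := by
      intro y
      exact Real.sq_sqrt (by nlinarith [hp y, hq y])
    calc (∑ y, |p y - q y|)^2
        = (∑ y, |p y - q y| / Real.sqrt (p y + q y) * Real.sqrt (p y + q y))^2 := by
          rw [Finset.sum_congr rfl (fun y _ => e1 y)]
      _ ≤ (∑ y, (|p y - q y| / Real.sqrt (p y + q y))^2) * ∑ y, (Real.sqrt (p y + q y))^2 := h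
      _ = (∑ y, (p y - q y)^2 / (p y + q y)) * (∑ y, (p y + q y)) := by
          rw [Finset.sum_congr rfl (fun y _ => e2 y), Finset.sum_congr rfl (fun y _ => e3 y)]
  have hsum2 : (∑ y, (p y + q y)) = 2 := by rw [Finset.sum_add_distrib, hp1, hq1]; norm_num
  have hKL : KLdiv p q = ∑ y, (p y * Real.log (p y / q y) - p y + q y) := by
    rw [KLdiv]
    have : ∑ y, (p y * Real.log (p y / q y) - p y + q y)
        = (∑ y, p y * Real.log (p y / q y)) - (∑ y, p y) + (∑ y, q y) := by
      rw [Finset.sum_add_distrib, Finset.sum_sub_distrib]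
    rw [this, hp1, hq1]; ring
  have hpt : ∑ y, (p y - q y)^2 / (p y + q y) ≤ 2 * KLdiv p q := by
    rw [hKL, Finset.mul_sum]
    refine Finset.sum_le_sum (fun y _ => ?_)
    have := log_ineq (hp y) (hq y)
    have hden : (0:ℝ) < p y + q y := by nlinarith [hp y, hq y]
    rw [div_le_iff₀ (by positivity)] at this ⊢
    nlinarith [this]
  nlinarith [hCS, hpt, Finset.sum_nonneg (fun y (_ : y ∈ Finset.univ) =>
    div_nonneg (sq_nonneg (p y - q y)) (by nlinarith [hp y, hq y] : (0:ℝ) ≤ p y + q y))]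

lemma KL_nonneg [Nonempty Y] (a b : Y → ℝ) : 0 ≤ KLdiv (softmax a) (softmax b) := by
  have := pinsker4 (softmax a) (softmax b) (softmax_pos a) (softmax_pos b)
    (softmax_sum a) (softmax_sum b)
  nlinarith [sq_nonneg (∑ y, |softmax a y - softmax b y|)]

end Aux
section Aux2
variable {Y : Type*} [Fintype Y]

lemma master [Nonempty Y] (a h u w : Y → ℝ) (c : ℝ) :
    KLdiv (softmax a) (softmax w) - (1-c) * KLdiv (softmax a) (softmax u)
      = KLdiv (softmax h) (softmax w) - (1-c) * KLdiv (softmax h) (softmax u)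
        - c * KLdiv (softmax h) (softmax a)
        + ∑ y, (softmax h y - softmax a y) * (w y - (1-c) * u y - c * a y) := by
  rw [KL_eq a w, KL_eq a u, KL_eq h w, KL_eq h u, KL_eq h a]
  have key : ∀ y : Y,
      (softmax h y * (h y - w y) - (1-c) * (softmax h y * (h y - u y))
        - c * (softmax h y * (h y - a y))
        + (softmax h y - softmax a y) * (w y - (1-c) * u y - c * a y))
      = softmax a y * (a y - w y) - (1-c) * (softmax a y * (a y - u y)) := by
    intro y; ring
  have hsums :
      (∑ y, softmax h y * (h y - w y)) - (1-c) * (∑ y, softmax h y * (h y - u y))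
        - c * (∑ y, softmax h y * (h y - a y))
        + (∑ y, (softmax h y - softmax a y) * (w y - (1-c) * u y - c * a y))
      = (∑ y, softmax a y * (a y - w y)) - (1-c) * (∑ y, softmax a y * (a y - u y)) := by
    rw [Finset.mul_sum, Finset.mul_sum, Finset.mul_sum, ← Finset.sum_sub_distrib,
      ← Finset.sum_sub_distrib, ← Finset.sum_add_distrib, ← Finset.sum_sub_distrib]
    exact Finset.sum_congr rfl (fun y _ => key y)
  linarith [hsums]

lemma matVec_sub (P : Y → Y → ℝ) (p q : Y → ℝ) (y : Y) :
    matVec P p y - matVec P q y = matVec P (fun y' => p y' - q y') y := by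
  simp only [matVec, mul_sub, Finset.sum_sub_distrib]

lemma KL_upper [Nonempty Y] (h w : Y → ℝ) (ε : ℝ) (hε0 : 0 ≤ ε) (hε1 : ε ≤ 1)
    (hδ : ∀ y, |w y - h y| ≤ ε) :
    KLdiv (softmax h) (softmax w) ≤ (3/4) * ε^2 := by
  rw [KL_eq]
  have hZh := sum_exp_pos h
  have hZw := sum_exp_pos w
  have hratio : Real.log (∑ y, Real.exp (w y)) - Real.log (∑ y, Real.exp (h y))
      = Real.log (∑ y, softmax h y * Real.exp (w y - h y)) := by
    rw [← Real.log_div hZw.ne' hZh.ne']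
    congr 1
    rw [Finset.sum_div]
    refine Finset.sum_congr rfl (fun y _ => ?_)
    rw [softmax, div_mul_eq_mul_div, ← Real.exp_add]
    congr 2
    ring
  rw [hratio]
  have hXpos : 0 < ∑ y, softmax h y * Real.exp (w y - h y) :=
    Finset.sum_pos (fun y _ => mul_pos (softmax_pos h y) (Real.exp_pos _)) Finset.univ_nonempty
  have hlog : Real.log (∑ y, softmax h y * Real.exp (w y - h y))
      ≤ (∑ y, softmax h y * Real.exp (w y - h y)) - 1 :=
    Real.log_le_sub_one_of_pos hXpos
  have hexp : ∀ y : Y, Real.exp (w y - h y) ≤ 1 + (w y - h y) + (3/4) * ε^2 := by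
    intro y
    have habs : |w y - h y| ≤ 1 := le_trans (hδ y) hε1
    have hb := Real.exp_bound habs (show 0 < 2 by norm_num)
    have hsum2 : ∑ i ∈ Finset.range 2, (w y - h y) ^ i / (i.factorial : ℝ)
        = 1 + (w y - h y) := by
      simp [Finset.sum_range_succ]
    rw [hsum2] at hb
    have hb' : Real.exp (w y - h y) - (1 + (w y - h y)) ≤ |w y - h y|^2 * (3/4) := by
      have := (abs_le.mp hb).2
      have : Real.exp (w y - h y) - (1 + (w y - h y))
          ≤ |w y - h y| ^ 2 * (((2:ℕ).succ : ℝ) / ((2:ℕ).factorial * 2)) := this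
      convert this using 2
      norm_num [Nat.factorial]
    have hsq : |w y - h y|^2 ≤ ε^2 := by
      have := hδ y
      nlinarith [abs_nonneg (w y - h y)]
    nlinarith
  have hbound : ∑ y, softmax h y * Real.exp (w y - h y)
      ≤ ∑ y, softmax h y * (1 + (w y - h y) + (3/4) * ε^2) :=
    Finset.sum_le_sum (fun y _ => mul_le_mul_of_nonneg_left (hexp y) (softmax_pos h y).le)
  have hexpand : ∑ y, softmax h y * (1 + (w y - h y) + (3/4) * ε^2)
      = 1 + (3/4)*ε^2 + ∑ y, softmax h y * (w y - h y) := by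
    have : ∀ y : Y, softmax h y * (1 + (w y - h y) + (3/4) * ε^2)
        = softmax h y * (1 + (3/4)*ε^2) + softmax h y * (w y - h y) := by intro y; ring
    rw [Finset.sum_congr rfl (fun y _ => this y), Finset.sum_add_distrib, ← Finset.sum_mul,
      softmax_sum, one_mul]
  have hflip : ∑ y, softmax h y * (h y - w y) = - ∑ y, softmax h y * (w y - h y) := by
    rw [← Finset.sum_neg_distrib]
    exact Finset.sum_congr rfl (fun y _ => by ring)
  linarith [hlog, hbound, hexpand.le, hflip.le, hflip.ge]

end Aux2

/-- under exact EGPO updates with `0 < η ≤ 1/(β+3)`, for every `t ≥ 0`,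
`KL(π*_β ‖ π^{(t+1)}) ≤ (1 − ηβ) · KL(π*_β ‖ π^{(t)})`. -/
theorem egpo_exact_one_step_contraction
    {Y : Type*} [Fintype Y] (hY : 2 ≤ Fintype.card Y)
    (P : Y → Y → ℝ)
    (hP0 : ∀ y y', 0 ≤ P y y') (hP1 : ∀ y y', P y y' ≤ 1)
    (hPsum : ∀ y y', P y y' + P y' y = 1)
    (β : ℝ) (hβ : 0 < β)
    (θref : Y → ℝ)
    (θstar : Y → ℝ)
    (hstar : θstar = fun y => θref y + matVec P (softmax θstar) y / β)
    (η : ℝ) (hη : 0 < η) (hη' : η ≤ 1 / (β + 3))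
    (θ θhalf : ℕ → Y → ℝ)
    (hhalf : ∀ t, θhalf t = fun y =>
      (1 - η * β) * θ t y + η * β * (θref y + matVec P (softmax (θ t)) y / β))
    (hstep : ∀ t, θ (t + 1) = fun y =>
      (1 - η * β) * θ t y + η * β * (θref y + matVec P (softmax (θhalf t)) y / β))
    (t : ℕ) :
    KLdiv (softmax θstar) (softmax (θ (t + 1)))
      ≤ (1 - η * β) * KLdiv (softmax θstar) (softmax (θ t)) := by
  have hNE : Nonempty Y := Fintype.card_pos_iff.mp (by omega)
  -- abbreviations
  let a := θstar
  let u := θ t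
  let h := θhalf t
  let w := θ (t + 1)
  -- numeric facts
  have hβ3 : η * (β + 3) ≤ 1 := (le_div_iff₀ (by linarith)).mp hη'
  have hη3 : η ≤ 1/3 := by nlinarith
  -- pointwise formulas
  have hwy : ∀ y, w y = (1 - η * β) * u y
      + η * β * (θref y + matVec P (softmax h) y / β) := fun y => congrFun (hstep t) y
  have hhy : ∀ y, h y = (1 - η * β) * u y
      + η * β * (θref y + matVec P (softmax u) y / β) := fun y => congrFun (hhalf t) y
  have hay : ∀ y, a y = θref y + matVec P (softmax a) y / β := fun y => congrFun hstar y
  have hΔ : ∀ y, w y - (1 - η * β) * u y - (η * β) * a y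
      = η * (matVec P (softmax h) y - matVec P (softmax a) y) := by
    intro y
    rw [hwy y]
    nth_rewrite 1 [hay y]
    field_simp
    ring
  have hδ : ∀ y, w y - h y
      = η * (matVec P (softmax h) y - matVec P (softmax u) y) := by
    intro y
    rw [hwy y, hhy y]
    field_simp
    ring
  -- the skew term vanishes
  have hv0 : ∑ y, (softmax h y - softmax a y) = 0 := by
    rw [Finset.sum_sub_distrib, softmax_sum, softmax_sum, sub_self]
  have hzero : ∑ y, (softmax h y - softmax a y)
      * (w y - (1 - η * β) * u y - (η * β) * a y) = 0 := by
    have hs := skew P hPsum (fun y => softmax h y - softmax a y) hv0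
    have : ∀ y : Y, (softmax h y - softmax a y)
        * (w y - (1 - η * β) * u y - (η * β) * a y)
        = η * ((fun y' => softmax h y' - softmax a y') y
            * matVec P (fun y' => softmax h y' - softmax a y') y) := by
      intro y
      rw [hΔ y, matVec_sub]
      ring
    rw [Finset.sum_congr rfl (fun y _ => this y), ← Finset.mul_sum, hs, mul_zero]
  -- total variation and step-size bounds
  have hV2 : (∑ y, |softmax h y - softmax u y|) ≤ 2 := by
    have : ∀ y : Y, |softmax h y - softmax u y| ≤ softmax h y + softmax u y := by
      intro y
      rw [abs_sub_le_iff]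
      constructor <;> nlinarith [softmax_pos h y, softmax_pos u y]
    calc (∑ y, |softmax h y - softmax u y|) ≤ ∑ y, (softmax h y + softmax u y) :=
          Finset.sum_le_sum (fun y _ => this y)
      _ = 2 := by rw [Finset.sum_add_distrib, softmax_sum, softmax_sum]; norm_num
  have hV0 : 0 ≤ ∑ y, |softmax h y - softmax u y| :=
    Finset.sum_nonneg (fun y _ => abs_nonneg _)
  set V : ℝ := ∑ y, |softmax h y - softmax u y| with hVdef
  have hδb : ∀ y, |w y - h y| ≤ η * V / 2 := by
    intro y
    rw [hδ y, abs_mul, abs_of_pos hη]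
    have := matVec_diff_bound P hP0 hP1 (softmax h) (softmax u)
      (by rw [softmax_sum, softmax_sum]) y
    calc η * |matVec P (softmax h) y - matVec P (softmax u) y| ≤ η * (V / 2) :=
          mul_le_mul_of_nonneg_left this hη.le
      _ = η * V / 2 := by ring
  -- KL bounds
  have hKLhw : KLdiv (softmax h) (softmax w) ≤ (3/4) * (η * V / 2)^2 := by
    refine KL_upper h w (η * V / 2) (by positivity) ?_ hδb
    nlinarith
  have hpinsk : V^2 ≤ 4 * KLdiv (softmax h) (softmax u) :=
    pinsker4 (softmax h) (softmax u) (softmax_pos h) (softmax_pos u)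
      (softmax_sum h) (softmax_sum u)
  have hKLha0 : 0 ≤ KLdiv (softmax h) (softmax a) := KL_nonneg h a
  have hKLhu0 : 0 ≤ KLdiv (softmax h) (softmax u) := KL_nonneg h u
  -- master identity
  have hm := master a h u w (η * β)
  rw [hzero, add_zero] at hm
  have hcoef : (3/4) * η^2 ≤ 1 - η * β := by nlinarith
  show KLdiv (softmax a) (softmax w) ≤ (1 - η * β) * KLdiv (softmax a) (softmax u)
  nlinarith [hm, hKLhw, hpinsk, hKLha0, hKLhu0, hcoef, sq_nonneg V, sq_nonneg η,
    mul_pos hη hβ, mul_le_mul_of_nonneg_left hpinsk (by positivity : (0:ℝ) ≤ (3/16) * η^2)]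
end

section
/- Let 0 < ε, and run exact EGPO with π^{(0)} = π_ref = Uniform(Y), β = ε / (4 log|Y|), and η = 1/(β+3). Then for every T such that (2/β + 4/η) · log|Y| · (1 − ηβ)^T ≤ ε/2, both DualGap(π^{(T)}) ≤ ε and DualGap(π^{(T+1/2)}) ≤ ε hold; in particular an ε-Nash equilibrium of the unregularized game is reached after O((1/ε) · polylog(|Y|/ε)) iterations. -/
open Real

/-- The probability simplex over a finite set. -/
def simplex (Y : Type*) [Fintype Y] : Set (Y → ℝ) :=
  {p | (∀ y, 0 ≤ p y) ∧ ∑ y, p y = 1}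

/-- Value of the preference game: `V(π, π') = ∑ y y', π(y) P(y,y') π'(y')`. -/
noncomputable def Vval {Y : Type*} [Fintype Y] (P : Y → Y → ℝ) (p q : Y → ℝ) : ℝ :=
  ∑ y, ∑ y', p y * P y y' * q y'

/-- Regularized value `V_β(π, π') = V(π, π') − β KL(π‖π_ref) + β KL(π'‖π_ref)`. -/
noncomputable def Vreg {Y : Type*} [Fintype Y] (P : Y → Y → ℝ) (β : ℝ) (πref : Y → ℝ)
    (p q : Y → ℝ) : ℝ :=
  Vval P p q - β * KLdiv p πref + β * KLdiv q πref

/-- Regularized duality gap. -/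
noncomputable def DualGapReg {Y : Type*} [Fintype Y] (P : Y → Y → ℝ) (β : ℝ) (πref : Y → ℝ)
    (p : Y → ℝ) : ℝ :=
  (⨆ q : simplex Y, Vreg P β πref q.1 p) - (⨅ q : simplex Y, Vreg P β πref p q.1)

/-- Unregularized duality gap. -/
noncomputable def DualGap {Y : Type*} [Fintype Y] (P : Y → Y → ℝ) (p : Y → ℝ) : ℝ :=
  (⨆ q : simplex Y, Vval P q.1 p) - (⨅ q : simplex Y, Vval P p q.1)

namespace EGPOaux

variable {Y : Type*} [Fintype Y]

lemma sum_exp_pos [Nonempty Y] (θ : Y → ℝ) : 0 < ∑ y, Real.exp (θ y) :=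
  Finset.sum_pos (fun y _ => Real.exp_pos _) Finset.univ_nonempty

lemma softmax_pos [Nonempty Y] (θ : Y → ℝ) (y : Y) : 0 < softmax θ y :=
  div_pos (Real.exp_pos _) (sum_exp_pos θ)

lemma softmax_sum [Nonempty Y] (θ : Y → ℝ) : ∑ y, softmax θ y = 1 := by
  simp only [softmax]
  rw [← Finset.sum_div, div_self (sum_exp_pos θ).ne']

lemma log_softmax [Nonempty Y] (θ : Y → ℝ) (y : Y) :
    Real.log (softmax θ y) = θ y - Real.log (∑ y', Real.exp (θ y')) := by
  rw [softmax, Real.log_div (Real.exp_pos _).ne' (sum_exp_pos θ).ne', Real.log_exp]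

lemma KL_eq (p r : Y → ℝ) (hp : ∀ y, 0 ≤ p y) (hr : ∀ y, 0 < r y) :
    KLdiv p r = (∑ y, p y * Real.log (p y)) - ∑ y, p y * Real.log (r y) := by
  rw [← Finset.sum_sub_distrib]
  refine Finset.sum_congr rfl fun y _ => ?_
  rcases eq_or_lt_of_le (hp y) with h | h
  · simp [← h]
  · rw [Real.log_div h.ne' (hr y).ne']; ring

/-- the function `ψ x = log x - (3/2)(x-1)(x+5)/(x+2)^2`. -/
noncomputable def psiAux (x : ℝ) : ℝ := Real.log x - (3/2)*((x-1)*(x+5))/(x+2)^2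

noncomputable def hAux (x : ℝ) : ℝ := x * Real.log x - x + 1 - (3/2)*(x-1)^2/(x+2)

lemma psiAux_hasDeriv {x : ℝ} (hx : 0 < x) :
    HasDerivAt psiAux (((x-1)^2*(x+8))/(x*(x+2)^3)) x := by
  have h2 : x + 2 ≠ 0 := by positivity
  have hd : HasDerivAt (fun x : ℝ => (3/2)*((x-1)*(x+5))/(x+2)^2)
      ((((3/2)*((1*(x+5))+(x-1)*1)) * (x+2)^2 - (3/2)*((x-1)*(x+5)) * (2*(x+2)^1*1)) / ((x+2)^2)^2) x := by
    exact (((((hasDerivAt_id x).sub_const 1).mul ((hasDerivAt_id x).add_const 5)).const_mul (3/2)).div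
      (((hasDerivAt_id x).add_const 2).pow 2) (by positivity))
  have := (Real.hasDerivAt_log hx.ne').sub hd
  refine this.congr_deriv ?_
  field_simp
  ring

lemma hAux_hasDeriv {x : ℝ} (hx : 0 < x) : HasDerivAt hAux (psiAux x) x := by
  have h2 : x + 2 ≠ 0 := by positivity
  have hd : HasDerivAt (fun x : ℝ => (3/2)*(x-1)^2/(x+2))
      ((((3/2)*(2*(x-1)^1*1)) * (x+2) - (3/2)*(x-1)^2 * 1) / (x+2)^2) x := by
    exact ((((hasDerivAt_id x).sub_const 1).pow 2).const_mul (3/2)).div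
      ((hasDerivAt_id x).add_const 2) h2
  have := (((Real.hasDerivAt_mul_log hx.ne').sub (hasDerivAt_id x)).add_const 1).sub hd
  refine this.congr_deriv ?_
  unfold psiAux
  field_simp
  ring

lemma psiAux_mono : MonotoneOn psiAux (Set.Ioi (0:ℝ)) := by
  have hi : interior (Set.Ioi (0:ℝ)) = Set.Ioi 0 := interior_Ioi
  refine monotoneOn_of_deriv_nonneg (convex_Ioi 0) ?_ ?_ ?_
  · intro x hx
    exact ((psiAux_hasDeriv hx).continuousAt).continuousWithinAt
  · rw [hi]
    intro x hx
    exact (psiAux_hasDeriv hx).differentiableAt.differentiableWithinAt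
  · rw [hi]
    intro x hx
    rw [(psiAux_hasDeriv hx).deriv]
    have hx' : (0:ℝ) < x := hx
    positivity

lemma psiAux_one : psiAux 1 = 0 := by simp [psiAux]

lemma hAux_one : hAux 1 = 0 := by norm_num [hAux]

lemma hAux_nonneg {x : ℝ} (hx : 0 ≤ x) : 0 ≤ hAux x := by
  rcases eq_or_lt_of_le hx with h | hx
  · norm_num [hAux, ← h]
  rcases le_total x 1 with hx1 | hx1
  · have hanti : AntitoneOn hAux (Set.Ioc (0:ℝ) 1) := by
      have hint : interior (Set.Ioc (0:ℝ) 1) = Set.Ioo 0 1 := interior_Ioc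
      refine antitoneOn_of_deriv_nonpos (convex_Ioc 0 1) ?_ ?_ ?_
      · intro z hz
        exact ((hAux_hasDeriv hz.1).continuousAt).continuousWithinAt
      · rw [hint]; intro z hz
        exact (hAux_hasDeriv hz.1).differentiableAt.differentiableWithinAt
      · rw [hint]; intro z hz
        rw [(hAux_hasDeriv hz.1).deriv]
        have := psiAux_mono (Set.mem_Ioi.mpr hz.1) (Set.mem_Ioi.mpr one_pos) hz.2.le
        rw [psiAux_one] at this
        exact this
    have := hanti (Set.mem_Ioc.mpr ⟨hx, hx1⟩) (Set.mem_Ioc.mpr ⟨one_pos, le_refl 1⟩) hx1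
    rw [hAux_one] at this
    exact this
  · have hmono : MonotoneOn hAux (Set.Ici (1:ℝ)) := by
      have hint : interior (Set.Ici (1:ℝ)) = Set.Ioi 1 := interior_Ici
      refine monotoneOn_of_deriv_nonneg (convex_Ici 1) ?_ ?_ ?_
      · intro z hz
        exact ((hAux_hasDeriv (lt_of_lt_of_le one_pos hz)).continuousAt).continuousWithinAt
      · rw [hint]; intro z hz
        exact (hAux_hasDeriv (lt_trans one_pos hz)).differentiableAt.differentiableWithinAt
      · rw [hint]; intro z hz
        rw [(hAux_hasDeriv (lt_trans one_pos hz)).deriv]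
        have := psiAux_mono (Set.mem_Ioi.mpr one_pos) (Set.mem_Ioi.mpr (lt_trans one_pos hz)) hz.le
        rw [psiAux_one] at this
        exact this
    have := hmono (Set.mem_Ici.mpr (le_refl 1)) (Set.mem_Ici.mpr hx1) hx1
    rw [hAux_one] at this
    exact this

lemma pointwise_pinsker {p q : ℝ} (hp : 0 ≤ p) (hq : 0 < q) :
    (3/2)*(p-q)^2/(p+2*q) ≤ p * Real.log (p/q) - p + q := by
  have h := hAux_nonneg (x := p/q) (by positivity)
  have hkey : q * hAux (p/q) = p * Real.log (p/q) - p + q - (3/2)*(p-q)^2/(p+2*q) := by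
    unfold hAux
    have h1 : p + 2*q > 0 := by positivity
    field_simp
  nlinarith [mul_nonneg hq.le h]

lemma pinsker (p q : Y → ℝ) (hp : ∀ y, 0 ≤ p y) (hps : ∑ y, p y = 1)
    (hq : ∀ y, 0 < q y) (hqs : ∑ y, q y = 1) :
    (∑ y, |p y - q y|)^2 ≤ 2 * KLdiv p q := by
  have hKL : KLdiv p q = ∑ y, (p y * Real.log (p y / q y) - p y + q y) := by
    rw [KLdiv]
    rw [Finset.sum_add_distrib, Finset.sum_sub_distrib, hps, hqs]
    ring
  have hFsum : ∑ y, (3/2)*(p y - q y)^2/(p y + 2 * q y) ≤ KLdiv p q := by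
    rw [hKL]; exact Finset.sum_le_sum (fun y _ => pointwise_pinsker (hp y) (hq y))
  have hCS := Finset.sum_sq_le_sum_mul_sum_of_sq_eq_mul (Finset.univ (α := Y))
    (r := fun y => |p y - q y|)
    (f := fun y => (3/2)*(p y - q y)^2/(p y + 2 * q y))
    (g := fun y => (2/3)*(p y + 2 * q y))
    (fun y _ => by have := hp y; have := hq y; positivity)
    (fun y _ => by have := hp y; have := hq y; positivity)
    (fun y _ => by
      have h1 : p y + 2 * q y > 0 := by have := hp y; have := hq y; positivity
      rw [sq_abs]
      field_simp
      rw [mul_div_assoc, div_self (ne_of_gt (by linarith)), mul_one])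
  have hG : ∑ y, (2/3)*(p y + 2 * q y) = 2 := by
    rw [← Finset.mul_sum, Finset.sum_add_distrib, hps, ← Finset.mul_sum, hqs]
    norm_num
  rw [hG] at hCS
  calc (∑ y, |p y - q y|)^2 ≤ (∑ y, (3/2)*(p y - q y)^2/(p y + 2 * q y)) * 2 := hCS
    _ ≤ KLdiv p q * 2 := by
        apply mul_le_mul_of_nonneg_right hFsum; norm_num
    _ = 2 * KLdiv p q := by ring

lemma KL_nonneg (p q : Y → ℝ) (hp : ∀ y, 0 ≤ p y) (hps : ∑ y, p y = 1)
    (hq : ∀ y, 0 < q y) (hqs : ∑ y, q y = 1) : 0 ≤ KLdiv p q := by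
  nlinarith [pinsker p q hp hps hq hqs, sq_nonneg (∑ y, |p y - q y|)]

lemma abs_le_sqrt_KL (p q : Y → ℝ) (hp : ∀ y, 0 ≤ p y) (hps : ∑ y, p y = 1)
    (hq : ∀ y, 0 < q y) (hqs : ∑ y, q y = 1) :
    ∑ y, |p y - q y| ≤ Real.sqrt (2 * KLdiv p q) := by
  exact Real.le_sqrt_of_sq_le (pinsker p q hp hps hq hqs)

lemma KL_le_log_card [Nonempty Y] (q : Y → ℝ) (hq : ∀ y, 0 ≤ q y) (hqs : ∑ y, q y = 1) :
    KLdiv q (fun _ => (Fintype.card Y : ℝ)⁻¹) ≤ Real.log (Fintype.card Y) := by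
  have hN : (0:ℝ) < Fintype.card Y := by
    have := Fintype.card_pos (α := Y); positivity
  have hterm : ∀ y, q y * Real.log (q y / (Fintype.card Y : ℝ)⁻¹) ≤ q y * Real.log (Fintype.card Y) := by
    intro y
    rcases eq_or_lt_of_le (hq y) with h | h
    · simp [← h]
    · have hq1 : q y ≤ 1 := by
        rw [← hqs]
        exact Finset.single_le_sum (fun y _ => hq y) (Finset.mem_univ y)
      have : Real.log (q y / (Fintype.card Y : ℝ)⁻¹) = Real.log (q y) + Real.log (Fintype.card Y) := by
        rw [Real.log_div h.ne' (inv_ne_zero hN.ne'), Real.log_inv]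
        ring
      rw [this]
      have hlog : Real.log (q y) ≤ 0 := Real.log_nonpos (hq y) hq1
      nlinarith
  calc KLdiv q _ ≤ ∑ y, q y * Real.log (Fintype.card Y) := Finset.sum_le_sum (fun y _ => hterm y)
    _ = Real.log (Fintype.card Y) := by rw [← Finset.sum_mul, hqs, one_mul]

lemma KL_single [Nonempty Y] [DecidableEq Y] (y₀ : Y) :
    KLdiv (fun y => if y = y₀ then (1:ℝ) else 0) (fun _ => (Fintype.card Y : ℝ)⁻¹)
      = Real.log (Fintype.card Y) := by
  have hN : (0:ℝ) < Fintype.card Y := by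
    have := Fintype.card_pos (α := Y); positivity
  rw [KLdiv, Finset.sum_eq_single y₀]
  · simp [Real.log_inv]
  · intro b _ hb; simp [hb]
  · intro h; exact absurd (Finset.mem_univ y₀) h

lemma three_point (pp πp u g : Y → ℝ) (η a C : ℝ)
    (hπ : ∀ y, 0 < pp y) (hπp : ∀ y, 0 < πp y) (hπps : ∑ y, πp y = 1)
    (hu : ∀ y, 0 < u y)
    (hlog : ∀ y, Real.log (πp y) = (1-a) * Real.log (pp y) + a * Real.log (u y) + η * g y + C)
    (q : Y → ℝ) (hq : ∀ y, 0 ≤ q y) (hqs : ∑ y, q y = 1) :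
    KLdiv q πp = (1-a)*(KLdiv q pp - KLdiv πp pp) + a*(KLdiv q u - KLdiv πp u)
      - η * ∑ y, (q y - πp y) * g y := by
  have expand : ∀ (p : Y → ℝ), (∀ y, 0 ≤ p y) → (∑ y, p y = 1) →
      ∑ y, p y * Real.log (πp y) = (1-a) * ∑ y, p y * Real.log (pp y)
        + a * ∑ y, p y * Real.log (u y) + η * ∑ y, p y * g y + C := by
    intro p hp hps
    calc ∑ y, p y * Real.log (πp y)
        = ∑ y, ((1-a) * (p y * Real.log (pp y)) + a * (p y * Real.log (u y))
            + η * (p y * g y) + C * p y) := by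
          refine Finset.sum_congr rfl fun y _ => ?_
          rw [hlog y]; ring
      _ = _ := by
          rw [Finset.sum_add_distrib, Finset.sum_add_distrib, Finset.sum_add_distrib,
            ← Finset.mul_sum, ← Finset.mul_sum, ← Finset.mul_sum, ← Finset.mul_sum, hps, mul_one]
  have e1 := expand q hq hqs
  have e2 := expand πp (fun y => (hπp y).le) hπps
  have esub : ∑ y, (q y - πp y) * g y = (∑ y, q y * g y) - ∑ y, πp y * g y := by
    rw [← Finset.sum_sub_distrib]
    exact Finset.sum_congr rfl fun y _ => by ring
  rw [KL_eq q πp hq hπp, KL_eq q pp hq hπ, KL_eq q u hq hu,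
    KL_eq πp pp (fun y => (hπp y).le) hπ, KL_eq πp u (fun y => (hπp y).le) hu, esub, e1, e2]
  ring

lemma abs_sum_le_half (s w : Y → ℝ) (hs : ∑ y, s y = 0)
    (hw0 : ∀ y, 0 ≤ w y) (hw1 : ∀ y, w y ≤ 1) :
    |∑ y, s y * w y| ≤ (∑ y, |s y|) / 2 := by
  have h1 : ∑ y, s y * w y = ∑ y, s y * (w y - 1/2) := by
    rw [show ∑ y, s y * (w y - 1/2) = (∑ y, s y * w y) - (∑ y, s y) * (1/2) by
      rw [Finset.sum_mul, ← Finset.sum_sub_distrib]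
      exact Finset.sum_congr rfl fun y _ => by ring, hs]
    ring
  rw [h1]
  calc |∑ y, s y * (w y - 1/2)| ≤ ∑ y, |s y * (w y - 1/2)| := Finset.abs_sum_le_sum_abs _ _
    _ ≤ ∑ y, |s y| * (1/2) := by
        refine Finset.sum_le_sum fun y _ => ?_
        rw [abs_mul]
        refine mul_le_mul_of_nonneg_left ?_ (abs_nonneg _)
        rw [abs_le]
        constructor <;> nlinarith [hw0 y, hw1 y]
    _ = (∑ y, |s y|) / 2 := by rw [← Finset.sum_mul]; ring

section withP
variable (P : Y → Y → ℝ)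

lemma abs_matVec_le (hP0 : ∀ y y', 0 ≤ P y y') (hP1 : ∀ y y', P y y' ≤ 1)
    (b : Y → ℝ) (hb : ∑ y, b y = 0) (y : Y) :
    |matVec P b y| ≤ (∑ y', |b y'|) / 2 := by
  have : matVec P b y = ∑ y', b y' * P y y' := by
    unfold matVec
    exact Finset.sum_congr rfl fun y' _ => by ring
  rw [this]
  exact abs_sum_le_half b (fun y' => P y y') hb (fun y' => hP0 y y') (fun y' => hP1 y y')

lemma abs_inner_matVec_le (hP0 : ∀ y y', 0 ≤ P y y') (hP1 : ∀ y y', P y y' ≤ 1)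
    (a b : Y → ℝ) (hb : ∑ y, b y = 0) :
    |∑ y, a y * matVec P b y| ≤ (∑ y, |a y|) * ((∑ y, |b y|) / 2) := by
  calc |∑ y, a y * matVec P b y| ≤ ∑ y, |a y * matVec P b y| := Finset.abs_sum_le_sum_abs _ _
    _ ≤ ∑ y, |a y| * ((∑ y', |b y'|) / 2) := by
        refine Finset.sum_le_sum fun y _ => ?_
        rw [abs_mul]
        exact mul_le_mul_of_nonneg_left (abs_matVec_le P hP0 hP1 b hb y) (abs_nonneg _)
    _ = (∑ y, |a y|) * ((∑ y, |b y|) / 2) := by rw [← Finset.sum_mul]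

lemma inner_expand (p r : Y → ℝ) :
    ∑ y, p y * matVec P r y = ∑ y, ∑ y', p y * P y y' * r y' := by
  unfold matVec
  refine Finset.sum_congr rfl fun y _ => ?_
  rw [Finset.mul_sum]
  exact Finset.sum_congr rfl fun y' _ => by ring

lemma inner_self_half (hPsum : ∀ y y', P y y' + P y' y = 1)
    (p : Y → ℝ) (hps : ∑ y, p y = 1) :
    ∑ y, p y * matVec P p y = 1/2 := by
  have comm : (∑ y, ∑ y', p y * P y y' * p y') = ∑ y, ∑ y', p y' * P y' y * p y :=
    Finset.sum_comm
  have key : (∑ y, ∑ y', (p y * P y y' * p y' + p y' * P y' y * p y)) = 1 := by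
    calc ∑ y, ∑ y', (p y * P y y' * p y' + p y' * P y' y * p y)
        = ∑ y, ∑ y', p y * p y' := by
          refine Finset.sum_congr rfl fun y _ => Finset.sum_congr rfl fun y' _ => ?_
          linear_combination p y * p y' * hPsum y y'
      _ = ∑ y, p y * ∑ y', p y' := Finset.sum_congr rfl fun y _ => by rw [Finset.mul_sum]
      _ = 1 := by simp_rw [hps, mul_one]; exact hps
  have hsplit : (∑ y, ∑ y', (p y * P y y' * p y' + p y' * P y' y * p y))
      = (∑ y, ∑ y', p y * P y y' * p y') + (∑ y, ∑ y', p y' * P y' y * p y) := by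
    rw [← Finset.sum_add_distrib]
    exact Finset.sum_congr rfl fun y _ => Finset.sum_add_distrib
  rw [inner_expand]
  linarith

lemma inner_cross (hPsum : ∀ y y', P y y' + P y' y = 1)
    (p q : Y → ℝ) (hps : ∑ y, p y = 1) (hqs : ∑ y, q y = 1) :
    (∑ y, q y * matVec P p y) + (∑ y, p y * matVec P q y) = 1 := by
  have comm : (∑ y, ∑ y', p y * P y y' * q y') = ∑ y, ∑ y', p y' * P y' y * q y :=
    Finset.sum_comm
  have key : (∑ y, ∑ y', (q y * P y y' * p y' + p y' * P y' y * q y)) = 1 := by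
    calc ∑ y, ∑ y', (q y * P y y' * p y' + p y' * P y' y * q y)
        = ∑ y, ∑ y', q y * p y' := by
          refine Finset.sum_congr rfl fun y _ => Finset.sum_congr rfl fun y' _ => ?_
          linear_combination q y * p y' * hPsum y y'
      _ = ∑ y, q y * ∑ y', p y' := Finset.sum_congr rfl fun y _ => by rw [Finset.mul_sum]
      _ = 1 := by simp_rw [hps, mul_one]; exact hqs
  have hsplit : (∑ y, ∑ y', (q y * P y y' * p y' + p y' * P y' y * q y))
      = (∑ y, ∑ y', q y * P y y' * p y') + (∑ y, ∑ y', p y' * P y' y * q y) := by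
    rw [← Finset.sum_add_distrib]
    exact Finset.sum_congr rfl fun y _ => Finset.sum_add_distrib
  rw [inner_expand, inner_expand]
  linarith

end withP

/-- The `gap` function of the regularized game. -/
noncomputable def gapF (P : Y → Y → ℝ) (β : ℝ) (u : Y → ℝ) (q p : Y → ℝ) : ℝ :=
  (∑ y, (q y - p y) * matVec P p y) - β * KLdiv q u + β * KLdiv p u

lemma sum_sub_mul (a b c : Y → ℝ) :
    ∑ y, (a y - b y) * c y = (∑ y, a y * c y) - ∑ y, b y * c y := by
  rw [← Finset.sum_sub_distrib]
  exact Finset.sum_congr rfl fun y _ => by ring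

lemma matVec_sub (P : Y → Y → ℝ) (b c : Y → ℝ) (y : Y) :
    matVec P (fun y' => b y' - c y') y = matVec P b y - matVec P c y := by
  unfold matVec
  rw [← Finset.sum_sub_distrib]
  exact Finset.sum_congr rfl fun y' _ => by ring

lemma gap_antisym (P : Y → Y → ℝ) (hPsum : ∀ y y', P y y' + P y' y = 1) (β : ℝ) (u : Y → ℝ)
    (p q : Y → ℝ) (hps : ∑ y, p y = 1) (hqs : ∑ y, q y = 1) :
    gapF P β u q p + gapF P β u p q = 0 := by
  unfold gapF
  rw [sum_sub_mul, sum_sub_mul]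
  have h1 := inner_cross P hPsum p q hps hqs
  have h2 := inner_self_half P hPsum p hps
  have h3 := inner_self_half P hPsum q hqs
  linarith

section steps
variable (P : Y → Y → ℝ)

set_option maxHeartbeats 1000000 in
/-- Main extragradient one-step inequality. -/
lemma key_step (hP0 : ∀ y y', 0 ≤ P y y') (hP1 : ∀ y y', P y y' ≤ 1)
    (β η : ℝ) (hβ : 0 < β) (hη : 0 < η) (hη3 : η ≤ 1/3) (hρ3 : 1 - η*β = 3*η)
    (u pi mu pip : Y → ℝ) (hu0 : ∀ y, 0 < u y)
    (hpi0 : ∀ y, 0 < pi y) (hpis : ∑ y, pi y = 1)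
    (hmu0 : ∀ y, 0 < mu y) (hmus : ∑ y, mu y = 1)
    (hpip0 : ∀ y, 0 < pip y) (hpips : ∑ y, pip y = 1)
    (Chalf Cfull : ℝ)
    (hlogmu : ∀ y, Real.log (mu y) = (1-η*β) * Real.log (pi y) + (η*β) * Real.log (u y)
      + η * matVec P pi y + Chalf)
    (hlogpip : ∀ y, Real.log (pip y) = (1-η*β) * Real.log (pi y) + (η*β) * Real.log (u y)
      + η * matVec P mu y + Cfull)
    (q : Y → ℝ) (hq0 : ∀ y, 0 ≤ q y) (hqs : ∑ y, q y = 1) :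
    η * gapF P β u q mu + KLdiv q pip ≤ (1 - η*β) * KLdiv q pi := by
  have A := three_point pi pip u (matVec P mu) η (η*β) Cfull hpi0 hpip0 hpips hu0 hlogpip
    q hq0 hqs
  have B := three_point pi mu u (matVec P pi) η (η*β) Chalf hpi0 hmu0 hmus hu0 hlogmu
    pip (fun y => (hpip0 y).le) hpips
  rw [sum_sub_mul] at A B
  have hg : gapF P β u q mu = ((∑ y, q y * matVec P mu y) - ∑ y, mu y * matVec P mu y)
      - β * KLdiv q u + β * KLdiv mu u := by
    unfold gapF; rw [sum_sub_mul]
  -- the cross term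
  set na := ∑ y, |pip y - mu y| with hna
  set nb := ∑ y, |mu y - pi y| with hnb
  have hXb : (∑ y, pip y * matVec P mu y) - (∑ y, pip y * matVec P pi y)
      - (∑ y, mu y * matVec P mu y) + (∑ y, mu y * matVec P pi y) ≤ na * (nb / 2) := by
    have h := abs_inner_matVec_le P hP0 hP1 (fun y => pip y - mu y) (fun y => mu y - pi y)
      (by rw [Finset.sum_sub_distrib, hmus, hpis]; ring)
    have hexp : ∑ y, (pip y - mu y) * matVec P (fun y' => mu y' - pi y') y
        = (∑ y, pip y * matVec P mu y) - (∑ y, pip y * matVec P pi y)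
          - (∑ y, mu y * matVec P mu y) + (∑ y, mu y * matVec P pi y) := by
      have : ∀ y, (pip y - mu y) * matVec P (fun y' => mu y' - pi y') y
          = (pip y * matVec P mu y - pip y * matVec P pi y)
            - (mu y * matVec P mu y - mu y * matVec P pi y) := by
        intro y; rw [matVec_sub]; ring
      rw [Finset.sum_congr rfl fun y _ => this y, Finset.sum_sub_distrib,
        Finset.sum_sub_distrib, Finset.sum_sub_distrib]
      ring
    rw [hexp] at h
    have := (abs_le.mp h).2
    linarith
  have pa := pinsker pip mu (fun y => (hpip0 y).le) hpips hmu0 hmus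
  have pb := pinsker mu pi (fun y => (hmu0 y).le) hmus hpi0 hpis
  have k1 := KL_nonneg pip mu (fun y => (hpip0 y).le) hpips hmu0 hmus
  have k2 := KL_nonneg mu pi (fun y => (hmu0 y).le) hmus hpi0 hpis
  have hna0 : 0 ≤ na := Finset.sum_nonneg fun y _ => abs_nonneg _
  have hnb0 : 0 ≤ nb := Finset.sum_nonneg fun y _ => abs_nonneg _
  -- E1 : exact identity
  have E1 : KLdiv q pip + KLdiv pip mu + η * gapF P β u q mu
      = (1 - η*β) * KLdiv q pi - (1 - η*β) * KLdiv mu pi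
        + η * ((∑ y, pip y * matVec P mu y) - (∑ y, pip y * matVec P pi y)
          - (∑ y, mu y * matVec P mu y) + (∑ y, mu y * matVec P pi y)) := by
    linear_combination A + B + η * hg
  -- chain of bounds
  have s1 : η * ((∑ y, pip y * matVec P mu y) - (∑ y, pip y * matVec P pi y)
      - (∑ y, mu y * matVec P mu y) + (∑ y, mu y * matVec P pi y))
      ≤ η * (na * (nb/2)) := mul_le_mul_of_nonneg_left hXb hη.le
  have s2 : na * (nb/2) ≤ (na^2 + nb^2)/4 := by nlinarith [sq_nonneg (na - nb)]
  have s3 : η * (na * (nb/2)) ≤ η * ((na^2 + nb^2)/4) := mul_le_mul_of_nonneg_left s2 hη.le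
  have s4 : η * ((na^2 + nb^2)/4) ≤ η * ((2 * KLdiv pip mu + 2 * KLdiv mu pi)/4) := by
    apply mul_le_mul_of_nonneg_left _ hη.le
    linarith
  have s6 : η * KLdiv pip mu ≤ (1/3) * KLdiv pip mu := mul_le_mul_of_nonneg_right hη3 k1
  have s8 : 0 ≤ η * KLdiv mu pi := mul_nonneg hη.le k2
  have hρKL2 : (1 - η*β) * KLdiv mu pi = 3 * (η * KLdiv mu pi) := by
    linear_combination KLdiv mu pi * hρ3
  linarith [E1, s1, s3, s4, s6, s8, hρKL2, k1]

set_option maxHeartbeats 1000000 in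
/-- The half-step bound against an approximate equilibrium. -/
lemma half_step (hP0 : ∀ y y', 0 ≤ P y y') (hP1 : ∀ y y', P y y' ≤ 1)
    (β η err : ℝ) (hβ : 0 < β) (hη : 0 < η) (hη3 : η ≤ 1/3) (hρ3 : 1 - η*β = 3*η)
    (u pi mu til : Y → ℝ) (hu0 : ∀ y, 0 < u y)
    (hpi0 : ∀ y, 0 < pi y) (hpis : ∑ y, pi y = 1)
    (hmu0 : ∀ y, 0 < mu y) (hmus : ∑ y, mu y = 1)
    (htil0 : ∀ y, 0 < til y) (htils : ∑ y, til y = 1)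
    (Chalf : ℝ)
    (hlogmu : ∀ y, Real.log (mu y) = (1-η*β) * Real.log (pi y) + (η*β) * Real.log (u y)
      + η * matVec P pi y + Chalf)
    (hopt : gapF P β u mu til ≤ err) :
    KLdiv til mu ≤ (49/12) * (η * KLdiv til pi) + η * err := by
  have B := three_point pi mu u (matVec P pi) η (η*β) Chalf hpi0 hmu0 hmus hu0 hlogmu
    til (fun y => (htil0 y).le) htils
  rw [sum_sub_mul] at B
  have hg : gapF P β u mu til = ((∑ y, mu y * matVec P til y) - ∑ y, til y * matVec P til y)
      - β * KLdiv mu u + β * KLdiv til u := by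
    unfold gapF; rw [sum_sub_mul]
  set x := ∑ y, |til y - mu y| with hx
  set yv := ∑ y, |til y - pi y| with hyv
  set z := ∑ y, |mu y - pi y| with hz
  have hWb : (∑ y, til y * matVec P pi y) - (∑ y, til y * matVec P til y)
      - (∑ y, mu y * matVec P pi y) + (∑ y, mu y * matVec P til y) ≥ -(x * (yv/2)) := by
    have h := abs_inner_matVec_le P hP0 hP1 (fun y => til y - mu y) (fun y => pi y - til y)
      (by rw [Finset.sum_sub_distrib, hpis, htils]; ring)
    have hexp : ∑ y, (til y - mu y) * matVec P (fun y' => pi y' - til y') y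
        = (∑ y, til y * matVec P pi y) - (∑ y, til y * matVec P til y)
          - (∑ y, mu y * matVec P pi y) + (∑ y, mu y * matVec P til y) := by
      have : ∀ y, (til y - mu y) * matVec P (fun y' => pi y' - til y') y
          = (til y * matVec P pi y - til y * matVec P til y)
            - (mu y * matVec P pi y - mu y * matVec P til y) := by
        intro y; rw [matVec_sub]; ring
      rw [Finset.sum_congr rfl fun y _ => this y, Finset.sum_sub_distrib,
        Finset.sum_sub_distrib, Finset.sum_sub_distrib]
      ring
    have habs : ∑ y, |pi y - til y| = yv := by
      rw [hyv]; exact Finset.sum_congr rfl fun y _ => abs_sub_comm _ _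
    rw [hexp, habs] at h
    have := (abs_le.mp h).1
    linarith
  have htri : x ≤ yv + z := by
    rw [hx, hyv, hz, ← Finset.sum_add_distrib]
    refine Finset.sum_le_sum fun y _ => ?_
    have : til y - mu y = (til y - pi y) + (pi y - mu y) := by ring
    rw [this]
    refine le_trans (abs_add_le _ _) ?_
    rw [abs_sub_comm (pi y) (mu y)]
  have pyv := pinsker til pi (fun y => (htil0 y).le) htils hpi0 hpis
  have pz := pinsker mu pi (fun y => (hmu0 y).le) hmus hpi0 hpis
  have kt := KL_nonneg til pi (fun y => (htil0 y).le) htils hpi0 hpis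
  have kz := KL_nonneg mu pi (fun y => (hmu0 y).le) hmus hpi0 hpis
  have hx0 : 0 ≤ x := Finset.sum_nonneg fun y _ => abs_nonneg _
  have hyv0 : 0 ≤ yv := Finset.sum_nonneg fun y _ => abs_nonneg _
  have hz0 : 0 ≤ z := Finset.sum_nonneg fun y _ => abs_nonneg _
  -- x*(yv/2) ≤ (13/24) yv² + (3/2) z²
  have hAM : x * (yv/2) ≤ (13/24) * yv^2 + (3/2) * z^2 := by
    have h1 : x * yv ≤ (yv + z) * yv := mul_le_mul_of_nonneg_right htri hyv0
    nlinarith [sq_nonneg (yv - 6*z)]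
  -- identity from B and hg
  have E1 : KLdiv til mu = (1 - η*β) * KLdiv til pi - (1 - η*β) * KLdiv mu pi
      + η * (gapF P β u mu til)
      - η * ((∑ y, til y * matVec P pi y) - (∑ y, til y * matVec P til y)
        - (∑ y, mu y * matVec P pi y) + (∑ y, mu y * matVec P til y)) := by
    linear_combination B - η * hg
  have s1 : η * (gapF P β u mu til) ≤ η * err := mul_le_mul_of_nonneg_left hopt hη.le
  have s2 : -(η * ((∑ y, til y * matVec P pi y) - (∑ y, til y * matVec P til y)
      - (∑ y, mu y * matVec P pi y) + (∑ y, mu y * matVec P til y)))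
      ≤ η * (x * (yv/2)) := by
    have h2 : -(x * (yv/2)) ≤ (∑ y, til y * matVec P pi y) - (∑ y, til y * matVec P til y)
      - (∑ y, mu y * matVec P pi y) + (∑ y, mu y * matVec P til y) := hWb
    have h3 := mul_le_mul_of_nonneg_left h2 hη.le
    linarith
  have s3 : η * (x * (yv/2)) ≤ η * ((13/24) * yv^2 + (3/2) * z^2) :=
    mul_le_mul_of_nonneg_left hAM hη.le
  have s4 : η * ((13/24) * yv^2 + (3/2) * z^2)
      ≤ η * ((13/24) * (2 * KLdiv til pi) + (3/2) * (2 * KLdiv mu pi)) := by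
    apply mul_le_mul_of_nonneg_left _ hη.le
    nlinarith
  have hρKL : (1 - η*β) * KLdiv mu pi = 3 * (η * KLdiv mu pi) := by
    linear_combination KLdiv mu pi * hρ3
  have hρKL2 : (1 - η*β) * KLdiv til pi = 3 * (η * KLdiv til pi) := by
    linear_combination KLdiv til pi * hρ3
  linarith [E1, s1, s2, s3, s4, hρKL, hρKL2]

end steps

lemma jensen_mul_log {ι : Type*} (S : Finset ι) (w z : ι → ℝ)
    (hw0 : ∀ i ∈ S, 0 ≤ w i) (hw1 : ∑ i ∈ S, w i = 1) (hz : ∀ i ∈ S, 0 ≤ z i) :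
    (∑ i ∈ S, w i * z i) * Real.log (∑ i ∈ S, w i * z i)
      ≤ ∑ i ∈ S, w i * (z i * Real.log (z i)) := by
  have := Real.convexOn_mul_log.map_sum_le hw0 hw1 (fun i hi => Set.mem_Ici.mpr (hz i hi))
  simpa [smul_eq_mul] using this

lemma dualGap_le [Nonempty Y] (P : Y → Y → ℝ) (hPsum : ∀ y y', P y y' + P y' y = 1)
    (p : Y → ℝ) (hp : p ∈ simplex Y) (M : ℝ) (hM : ∀ y, matVec P p y ≤ M) :
    DualGap P p ≤ 2*M - 1 := by
  have hne : Nonempty (simplex Y) := ⟨⟨p, hp⟩⟩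
  have h1 : (⨆ q : simplex Y, Vval P q.1 p) ≤ M := by
    refine ciSup_le fun q => ?_
    calc Vval P q.1 p = ∑ y, q.1 y * matVec P p y := (inner_expand P q.1 p).symm
      _ ≤ ∑ y, q.1 y * M :=
          Finset.sum_le_sum fun y _ => mul_le_mul_of_nonneg_left (hM y) (q.2.1 y)
      _ = M := by rw [← Finset.sum_mul, q.2.2, one_mul]
  have h2 : (1 - M : ℝ) ≤ ⨅ q : simplex Y, Vval P p q.1 := by
    refine le_ciInf fun q => ?_
    have hc := inner_cross P hPsum p q.1 hp.2 q.2.2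
    have hv : Vval P p q.1 = ∑ y, p y * matVec P q.1 y := (inner_expand P p q.1).symm
    have hub : ∑ y, q.1 y * matVec P p y ≤ M := by
      calc ∑ y, q.1 y * matVec P p y ≤ ∑ y, q.1 y * M :=
          Finset.sum_le_sum fun y _ => mul_le_mul_of_nonneg_left (hM y) (q.2.1 y)
        _ = M := by rw [← Finset.sum_mul, q.2.2, one_mul]
    linarith
  have := sub_le_sub h1 h2
  calc DualGap P p ≤ M - (1 - M) := this
    _ = 2*M - 1 := by ring

lemma num1 (L ε X : ℝ) (hL69 : (0.6931471803:ℝ) ≤ L) (hε : 0 < ε) (hX0 : 0 ≤ X)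
    (hTL2 : (8*L + 12*ε) * X ≤ ε^2/2) : 2*X ≤ (ε/2)^2 := by
  have h30 : 0 ≤ 2*L + 3*ε - 1 := by linarith
  have hq : 0 ≤ ε^2*(2*L + 3*ε - 1) := mul_nonneg (sq_nonneg ε) h30
  nlinarith [hTL2, hq, hX0, hε]

lemma num2 (L ε X η : ℝ) (hL69 : (0.6931471803:ℝ) ≤ L) (hε : 0 < ε) (hX0 : 0 ≤ X)
    (hη : 0 ≤ η) (hη3 : η ≤ 1/3)
    (hTL2 : (8*L + 12*ε) * X ≤ ε^2/2) : 2*((49/12)*(η*X)) ≤ (ε/2)^2 := by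
  have hX1 : η*X ≤ (1/3)*X := mul_le_mul_of_nonneg_right hη3 hX0
  have h30 : 0 ≤ 2*L + 3*ε - 49/36 := by linarith
  have hq : 0 ≤ ε^2*(2*L + 3*ε - 49/36) := mul_nonneg (sq_nonneg ε) h30
  nlinarith [hTL2, hq, hX0, hε, hX1]

set_option maxHeartbeats 1000000 in
theorem main_aux {Y : Type*} [Fintype Y] (hY : 2 ≤ Fintype.card Y)
    (P : Y → Y → ℝ) (hP0 : ∀ y y', 0 ≤ P y y') (hP1 : ∀ y y', P y y' ≤ 1)
    (hPsum : ∀ y y', P y y' + P y' y = 1)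
    (ε : ℝ) (hε : 0 < ε) (β : ℝ) (hβdef : β = ε / (4 * Real.log (Fintype.card Y)))
    (η : ℝ) (hηdef : η = 1 / (β + 3))
    (pi mu : ℕ → Y → ℝ)
    (hpi0 : ∀ t y, 0 < pi t y) (hpis : ∀ t, ∑ y, pi t y = 1)
    (hmu0 : ∀ t y, 0 < mu t y) (hmus : ∀ t, ∑ y, mu t y = 1)
    (hpi0u : pi 0 = fun _ => (Fintype.card Y : ℝ)⁻¹)
    (hlogmu : ∀ t, ∃ C, ∀ y, Real.log (mu t y)
      = (1-η*β) * Real.log (pi t y) + (η*β) * Real.log ((Fintype.card Y : ℝ)⁻¹)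
        + η * matVec P (pi t) y + C)
    (hlogpi : ∀ t, ∃ C, ∀ y, Real.log (pi (t+1) y)
      = (1-η*β) * Real.log (pi t y) + (η*β) * Real.log ((Fintype.card Y : ℝ)⁻¹)
        + η * matVec P (mu t) y + C)
    (T : ℕ)
    (hT : (2 / β + 4 / η) * Real.log (Fintype.card Y) * (1 - η * β) ^ T ≤ ε / 2) :
    DualGap P (pi T) ≤ ε ∧ DualGap P (mu T) ≤ ε := by
  classical
  have hNY : Nonempty Y := Fintype.card_pos_iff.mp (by omega)
  have hN2 : (2:ℝ) ≤ (Fintype.card Y : ℝ) := by exact_mod_cast hY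
  set L : ℝ := Real.log (Fintype.card Y) with hLdef
  have hlog2 : (0.6931471803:ℝ) < Real.log 2 := Real.log_two_gt_d9
  have hL2 : Real.log 2 ≤ L := Real.log_le_log (by norm_num) hN2
  have hL69 : (0.6931471803:ℝ) ≤ L := by linarith
  have hL0 : 0 < L := by linarith
  have hβ : 0 < β := by rw [hβdef]; positivity
  have hη : 0 < η := by rw [hηdef]; positivity
  have hηβ1 : η * (β + 3) = 1 := by
    rw [hηdef]; field_simp
  have hη3 : η ≤ 1/3 := by nlinarith
  have hρ3 : 1 - η * β = 3 * η := by nlinarith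
  have hρ0 : (0:ℝ) < 1 - η*β := by rw [hρ3]; positivity
  have hρ1 : 1 - η*β < 1 := by nlinarith [mul_pos hη hβ]
  set u : Y → ℝ := fun _ => (Fintype.card Y : ℝ)⁻¹ with hudef
  have hN0 : (0:ℝ) < (Fintype.card Y : ℝ) := by linarith
  have hu0 : ∀ y, 0 < u y := fun y => inv_pos.mpr hN0
  have hus : ∑ y, u y = 1 := by
    simp only [hudef]
    rw [Finset.sum_const, Finset.card_univ, nsmul_eq_mul]
    exact mul_inv_cancel₀ hN0.ne'
  have hlogu : ∀ y : Y, Real.log (u y) = -L := fun y => by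
    rw [hudef, Real.log_inv, hLdef]
  have hKLu : ∀ q : Y → ℝ, (∀ y, 0 ≤ q y) → (∑ y, q y = 1) → KLdiv q u ≤ L :=
    fun q h1 h2 => KL_le_log_card q h1 h2
  -- star inequality
  have star : ∀ (t : ℕ) (q : Y → ℝ), (∀ y, 0 ≤ q y) → (∑ y, q y = 1) →
      η * gapF P β u q (mu t) + KLdiv q (pi (t+1)) ≤ (1 - η*β) * KLdiv q (pi t) := by
    intro t q hq0 hqs
    obtain ⟨C1, hC1⟩ := hlogmu t
    obtain ⟨C2, hC2⟩ := hlogpi t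
    exact key_step P hP0 hP1 β η hβ hη hη3 hρ3 u (pi t) (mu t) (pi (t+1)) hu0
      (hpi0 t) (hpis t) (hmu0 t) (hmus t) (hpi0 (t+1)) (hpis (t+1)) C1 C2 hC1 hC2 q hq0 hqs
  -- telescoped sum
  have tel : ∀ (q : Y → ℝ), (∀ y, 0 ≤ q y) → (∑ y, q y = 1) → ∀ S : ℕ,
      η * ∑ t ∈ Finset.range S, (1-η*β)^(S-1-t) * gapF P β u q (mu t)
        ≤ (1-η*β)^S * L := by
    intro q hq0 hqs S
    have key : η * ∑ t ∈ Finset.range S, (1-η*β)^(S-1-t) * gapF P β u q (mu t)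
        ≤ (1-η*β)^S * KLdiv q (pi 0) - KLdiv q (pi S) := by
      induction S with
      | zero => simp
      | succ S ih =>
        have hsplit : ∑ t ∈ Finset.range (S+1), (1-η*β)^(S+1-1-t) * gapF P β u q (mu t)
            = (1-η*β) * ∑ t ∈ Finset.range S, (1-η*β)^(S-1-t) * gapF P β u q (mu t)
              + gapF P β u q (mu S) := by
          rw [Finset.sum_range_succ]
          have h1 : (S+1-1-S) = 0 := by omega
          rw [h1, pow_zero, one_mul, Finset.mul_sum]
          congr 1
          refine Finset.sum_congr rfl fun t ht => ?_
          have ht' : t < S := Finset.mem_range.mp ht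
          have h2 : S + 1 - 1 - t = (S - 1 - t) + 1 := by omega
          rw [h2, pow_succ]
          ring
        rw [hsplit]
        have hstep := star S q hq0 hqs
        have h2 := mul_le_mul_of_nonneg_left ih hρ0.le
        have hpow : (1-η*β)^(S+1) = (1-η*β) * (1-η*β)^S := by rw [pow_succ]; ring
        rw [hpow]
        have e : η * ((1-η*β) * (∑ t ∈ Finset.range S, (1-η*β)^(S-1-t) * gapF P β u q (mu t))
            + gapF P β u q (mu S))
            = (1-η*β) * (η * ∑ t ∈ Finset.range S, (1-η*β)^(S-1-t) * gapF P β u q (mu t))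
              + η * gapF P β u q (mu S) := by ring
        rw [e]
        nlinarith [h2, hstep]
    have h3 : 0 ≤ KLdiv q (pi S) := KL_nonneg q (pi S) hq0 hqs (hpi0 S) (hpis S)
    have h4 : KLdiv q (pi 0) ≤ L := by rw [hpi0u]; exact hKLu q hq0 hqs
    have h5 : (1-η*β)^S * KLdiv q (pi 0) ≤ (1-η*β)^S * L :=
      mul_le_mul_of_nonneg_left h4 (pow_nonneg hρ0.le S)
    linarith
  -- KL of a simplex vector to uniform, in entropy form
  have hKLuform : ∀ p : Y → ℝ, (∀ y, 0 ≤ p y) → (∑ y, p y = 1) →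
      KLdiv p u = (∑ y, p y * Real.log (p y)) + L := by
    intro p h1 h2
    rw [KL_eq p u h1 hu0]
    have h3 : ∑ y, p y * Real.log (u y) = -L := by
      calc ∑ y, p y * Real.log (u y) = ∑ y, p y * (-L) :=
          Finset.sum_congr rfl fun y _ => by rw [hlogu y]
        _ = -L := by rw [← Finset.sum_mul, h2, one_mul]
    rw [h3]; ring
  -- per-S main bound
  have main : ∀ S : ℕ, 1 ≤ S →
      DualGap P (pi T) ≤ 2*β*L + 2*((1-η*β)^S*L/η)
        + Real.sqrt (2*((1-η*β)^T*L + ((1-η*β)^S*L/η)/β))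
      ∧ DualGap P (mu T) ≤ 2*β*L + 2*((1-η*β)^S*L/η)
        + Real.sqrt (2*((49/12)*(η*((1-η*β)^T*L + ((1-η*β)^S*L/η)/β)) + η*((1-η*β)^S*L/η))) := by
    intro S hS
    set E : ℝ := (1-η*β)^S*L/η with hEdef
    have hE0 : 0 ≤ E := by positivity
    set W : ℝ := ∑ t ∈ Finset.range S, (1-η*β)^(S-1-t) with hWdef
    have hW1 : 1 ≤ W := by
      rw [hWdef]
      have h2 : (1-η*β)^(S-1-(S-1)) ≤ ∑ t ∈ Finset.range S, (1-η*β)^(S-1-t) :=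
        Finset.single_le_sum (f := fun t => (1-η*β)^(S-1-t))
          (fun t _ => by positivity) (Finset.mem_range.mpr (show S-1 < S by omega))
      rw [Nat.sub_self, pow_zero] at h2
      exact h2
    have hW0 : 0 < W := lt_of_lt_of_le one_pos hW1
    set bar : Y → ℝ := fun y => (∑ t ∈ Finset.range S, (1-η*β)^(S-1-t) * mu t y) / W
      with hbardef
    have hbar0 : ∀ y, 0 < bar y := by
      intro y
      refine div_pos (Finset.sum_pos (fun t _ => mul_pos (by positivity) (hmu0 t y)) ?_) hW0
      exact Finset.nonempty_range_iff.mpr (by omega)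
    have hbars : ∑ y, bar y = 1 := by
      simp only [hbardef]
      rw [← Finset.sum_div, Finset.sum_comm]
      have h1 : ∑ t ∈ Finset.range S, ∑ y, (1-η*β)^(S-1-t) * mu t y = W := by
        rw [hWdef]
        refine Finset.sum_congr rfl fun t _ => ?_
        rw [← Finset.mul_sum, hmus t, mul_one]
      rw [h1]
      exact div_self hW0.ne'
    -- averaged gap bound
    have hgapavg : ∀ q : Y → ℝ, (∀ y, 0 ≤ q y) → (∑ y, q y = 1) → gapF P β u q bar ≤ E := by
      intro q hq0 hqs
      -- inner product linearity
      have hIbar : ∑ y, q y * matVec P bar y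
          = (∑ t ∈ Finset.range S, (1-η*β)^(S-1-t) * (∑ y, q y * matVec P (mu t) y)) / W := by
        have hmv : ∀ y, matVec P bar y
            = (∑ t ∈ Finset.range S, (1-η*β)^(S-1-t) * matVec P (mu t) y) / W := by
          intro y
          unfold matVec
          simp only [hbardef]
          have h1 : ∀ y' : Y, P y y' * ((∑ t ∈ Finset.range S, (1-η*β)^(S-1-t) * mu t y') / W)
              = (∑ t ∈ Finset.range S, (1-η*β)^(S-1-t) * (P y y' * mu t y')) / W := by
            intro y'
            rw [← mul_div_assoc]
            congr 1
            rw [Finset.mul_sum]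
            exact Finset.sum_congr rfl fun t _ => by ring
          rw [Finset.sum_congr rfl fun y' _ => h1 y']
          rw [← Finset.sum_div, Finset.sum_comm]
          congr 1
          exact Finset.sum_congr rfl fun t _ => by rw [Finset.mul_sum]
        calc ∑ y, q y * matVec P bar y
            = ∑ y, (∑ t ∈ Finset.range S, (1-η*β)^(S-1-t) * (q y * matVec P (mu t) y)) / W := by
              refine Finset.sum_congr rfl fun y _ => ?_
              rw [hmv y, ← mul_div_assoc]
              congr 1
              rw [Finset.mul_sum]
              refine Finset.sum_congr rfl fun t _ => by ring
          _ = (∑ y, ∑ t ∈ Finset.range S, (1-η*β)^(S-1-t) * (q y * matVec P (mu t) y)) / W := by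
              rw [← Finset.sum_div]
          _ = _ := by
              congr 1
              rw [show (∑ t ∈ Finset.range S, (1-η*β)^(S-1-t) * (∑ y, q y * matVec P (mu t) y))
                  = ∑ t ∈ Finset.range S, ∑ y, (1-η*β)^(S-1-t) * (q y * matVec P (mu t) y) from
                Finset.sum_congr rfl fun t _ => by rw [Finset.mul_sum]]
              exact Finset.sum_comm
    -- Jensen for the entropy term
      have hKLbar : KLdiv bar u
          ≤ (∑ t ∈ Finset.range S, (1-η*β)^(S-1-t) * KLdiv (mu t) u) / W := by
        have hws : ∑ t ∈ Finset.range S, (1-η*β)^(S-1-t) / W = 1 := by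
          rw [← Finset.sum_div, ← hWdef]
          exact div_self hW0.ne'
        have hjy : ∀ y, bar y * Real.log (bar y)
            ≤ ∑ t ∈ Finset.range S, ((1-η*β)^(S-1-t)/W) * (mu t y * Real.log (mu t y)) := by
          intro y
          have hbareq : bar y = ∑ t ∈ Finset.range S, ((1-η*β)^(S-1-t)/W) * mu t y := by
            simp only [hbardef]
            rw [Finset.sum_div]
            exact Finset.sum_congr rfl fun t _ => by ring
          rw [hbareq]
          exact jensen_mul_log (Finset.range S) (fun t => (1-η*β)^(S-1-t)/W)
            (fun t => mu t y) (fun t _ => by positivity) hws (fun t _ => (hmu0 t y).le)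
        have h1 : ∑ y, bar y * Real.log (bar y)
            ≤ ∑ t ∈ Finset.range S, ((1-η*β)^(S-1-t)/W) * (∑ y, mu t y * Real.log (mu t y)) := by
          calc ∑ y, bar y * Real.log (bar y)
              ≤ ∑ y, ∑ t ∈ Finset.range S, ((1-η*β)^(S-1-t)/W) * (mu t y * Real.log (mu t y)) :=
                Finset.sum_le_sum fun y _ => hjy y
            _ = _ := by
                rw [show (∑ t ∈ Finset.range S, ((1-η*β)^(S-1-t)/W) * (∑ y, mu t y * Real.log (mu t y)))
                    = ∑ t ∈ Finset.range S, ∑ y, ((1-η*β)^(S-1-t)/W) * (mu t y * Real.log (mu t y)) from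
                  Finset.sum_congr rfl fun t _ => by rw [Finset.mul_sum]]
                exact Finset.sum_comm
        rw [hKLuform bar (fun y => (hbar0 y).le) hbars]
        have h2 : ∀ t ∈ Finset.range S, ((1-η*β)^(S-1-t)/W) * (∑ y, mu t y * Real.log (mu t y))
            = ((1-η*β)^(S-1-t) * KLdiv (mu t) u) / W - ((1-η*β)^(S-1-t)/W) * L := by
          intro t _
          rw [hKLuform (mu t) (fun y => (hmu0 t y).le) (hmus t)]
          field_simp
          ring
        rw [Finset.sum_congr rfl h2] at h1
        rw [Finset.sum_sub_distrib, ← Finset.sum_div, ← Finset.sum_mul, hws] at h1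
        rw [Finset.sum_div] at h1 ⊢
        linarith
      -- combine: gapF q bar ≤ weighted average of gapF q (mu t)
      have hgapmu : ∀ t, gapF P β u q (mu t)
          = (∑ y, q y * matVec P (mu t) y) - 1/2 - β * KLdiv q u + β * KLdiv (mu t) u := by
        intro t
        unfold gapF
        rw [sum_sub_mul, inner_self_half P hPsum (mu t) (hmus t)]
      have hgapbar : gapF P β u q bar
          = (∑ y, q y * matVec P bar y) - 1/2 - β * KLdiv q u + β * KLdiv bar u := by
        unfold gapF
        rw [sum_sub_mul, inner_self_half P hPsum bar hbars]
      have htot := tel q hq0 hqs S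
      -- expand the weighted sum of gaps
      have hsum2 : ∑ t ∈ Finset.range S, (1-η*β)^(S-1-t) * gapF P β u q (mu t)
          = (∑ t ∈ Finset.range S, (1-η*β)^(S-1-t) * (∑ y, q y * matVec P (mu t) y))
            - W * (1/2) - W * (β * KLdiv q u)
            + β * ∑ t ∈ Finset.range S, (1-η*β)^(S-1-t) * KLdiv (mu t) u := by
        rw [hWdef, Finset.sum_mul, Finset.sum_mul, Finset.mul_sum]
        rw [← Finset.sum_sub_distrib, ← Finset.sum_sub_distrib, ← Finset.sum_add_distrib]
        refine Finset.sum_congr rfl fun t _ => ?_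
        rw [hgapmu t]
        ring
      have hb0 : 0 ≤ KLdiv bar u :=
        KL_nonneg bar u (fun y => (hbar0 y).le) hbars hu0 hus
      -- gapF q bar * W ≤ sum of weighted gaps
      have hfinal : W * gapF P β u q bar
          ≤ ∑ t ∈ Finset.range S, (1-η*β)^(S-1-t) * gapF P β u q (mu t) := by
        rw [hsum2, hgapbar, hIbar]
        have hKLmul := mul_le_mul_of_nonneg_left hKLbar (mul_nonneg hW0.le hβ.le)
        have e1 : W * ((∑ t ∈ Finset.range S, (1-η*β)^(S-1-t) * (∑ y, q y * matVec P (mu t) y)) / W)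
            = ∑ t ∈ Finset.range S, (1-η*β)^(S-1-t) * (∑ y, q y * matVec P (mu t) y) := by
          field_simp
        have e2 : W * β * ((∑ t ∈ Finset.range S, (1-η*β)^(S-1-t) * KLdiv (mu t) u) / W)
            = β * ∑ t ∈ Finset.range S, (1-η*β)^(S-1-t) * KLdiv (mu t) u := by
          field_simp
        nlinarith [hKLmul]
      have hlast : η * (W * gapF P β u q bar) ≤ (1-η*β)^S * L := by
        have := mul_le_mul_of_nonneg_left hfinal hη.le
        linarith [htot]
      -- divide by W
      have hEW : (1-η*β)^S * L = η * E := by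
        rw [hEdef]
        field_simp
      rw [hEW] at hlast
      have h6 : W * gapF P β u q bar ≤ E := by
        have h7 := (mul_le_mul_iff_right₀ hη).mp hlast
        linarith
      nlinarith [h6, hW1, hE0]
    -- contraction
    have hcontr : ∀ t : ℕ, KLdiv bar (pi t) ≤ (1-η*β)^t * L + E/β := by
      intro t
      induction t with
      | zero =>
        rw [pow_zero, one_mul, hpi0u]
        have h1 := hKLu bar (fun y => (hbar0 y).le) hbars
        have h2 : 0 ≤ E/β := div_nonneg hE0 hβ.le
        linarith
      | succ t ih =>
        have h1 := star t bar (fun y => (hbar0 y).le) hbars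
        have h2 : gapF P β u (mu t) bar ≤ E :=
          hgapavg (mu t) (fun y => (hmu0 t y).le) (hmus t)
        have h3 : -E ≤ gapF P β u bar (mu t) := by
          have h4 := gap_antisym P hPsum β u (mu t) bar (hmus t) hbars
          linarith
        have h5 := mul_le_mul_of_nonneg_left ih hρ0.le
        have h6 := mul_le_mul_of_nonneg_left h3 hη.le
        have hpow : (1-η*β)^(t+1) = (1-η*β) * (1-η*β)^t := by rw [pow_succ]; ring
        have e : (1-η*β) * (E/β) + η * E = E/β := by
          field_simp
          ring
        rw [hpow]
        nlinarith [h1, h5, h6, e]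
    have hKLbars : KLdiv bar (pi T) ≤ (1-η*β)^T * L + E/β := hcontr T
    have hKLbarmu : KLdiv bar (mu T) ≤ (49/12)*(η*((1-η*β)^T*L + E/β)) + η*E := by
      obtain ⟨C1, hC1⟩ := hlogmu T
      have h2 : gapF P β u (mu T) bar ≤ E := hgapavg (mu T) (fun y => (hmu0 T y).le) (hmus T)
      have h3 := half_step P hP0 hP1 β η E hβ hη hη3 hρ3 u (pi T) (mu T) bar hu0
        (hpi0 T) (hpis T) (hmu0 T) (hmus T) hbar0 hbars C1 hC1 h2
      have h4 : η * KLdiv bar (pi T) ≤ η * ((1-η*β)^T*L + E/β) :=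
        mul_le_mul_of_nonneg_left hKLbars hη.le
      nlinarith [h3, h4]
    have hPbar : ∀ y, matVec P bar y ≤ 1/2 + β*L + E := by
      intro y
      have hg := hgapavg (fun y' => if y' = y then (1:ℝ) else 0)
        (fun y' => by split <;> norm_num)
        (by simp)
      have h1 : ∑ y', ((if y' = y then (1:ℝ) else 0) - bar y') * matVec P bar y'
          = matVec P bar y - 1/2 := by
        rw [sum_sub_mul]
        have h2 : ∑ y', (if y' = y then (1:ℝ) else 0) * matVec P bar y' = matVec P bar y := by
          rw [Finset.sum_eq_single y]
          · simp
          · intro b _ hb; simp [hb]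
          · intro h; exact absurd (Finset.mem_univ y) h
        rw [h2, inner_self_half P hPsum bar hbars]
      have hKLe : KLdiv (fun y' => if y' = y then (1:ℝ) else 0) u = L := KL_single y
      have hKLbaru : 0 ≤ KLdiv bar u := KL_nonneg bar u (fun y' => (hbar0 y').le) hbars hu0 hus
      have hgeq : gapF P β u (fun y' => if y' = y then (1:ℝ) else 0) bar
          = (matVec P bar y - 1/2) - β * L + β * KLdiv bar u := by
        unfold gapF
        rw [h1, hKLe]
      rw [hgeq] at hg
      nlinarith [mul_nonneg hβ.le hKLbaru]
    have hsq1 : ∑ y, |bar y - pi T y| ≤ Real.sqrt (2*((1-η*β)^T*L + E/β)) := by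
      refine le_trans (abs_le_sqrt_KL bar (pi T) (fun y => (hbar0 y).le) hbars (hpi0 T) (hpis T))
        (Real.sqrt_le_sqrt ?_)
      linarith [hKLbars]
    have hPT : ∀ y, matVec P (pi T) y
        ≤ 1/2 + β*L + E + (1/2) * Real.sqrt (2*((1-η*β)^T*L + E/β)) := by
      intro y
      have hd : matVec P (fun y' => pi T y' - bar y') y = matVec P (pi T) y - matVec P bar y :=
        matVec_sub P (pi T) bar y
      have habs := abs_matVec_le P hP0 hP1 (fun y' => pi T y' - bar y')
        (by rw [Finset.sum_sub_distrib, hpis T, hbars]; ring) y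
      rw [hd] at habs
      have hcomm : ∑ y', |pi T y' - bar y'| = ∑ y', |bar y' - pi T y'| :=
        Finset.sum_congr rfl fun y' _ => abs_sub_comm _ _
      rw [hcomm] at habs
      have h5 := (abs_le.mp habs).2
      linarith [hPbar y, hsq1, h5]
    have hDG1 : DualGap P (pi T) ≤ 2*β*L + 2*E + Real.sqrt (2*((1-η*β)^T*L + E/β)) := by
      have h6 := dualGap_le P hPsum (pi T) ⟨fun y => (hpi0 T y).le, hpis T⟩ _ hPT
      linarith [h6]
    have hsq2 : ∑ y, |bar y - mu T y|
        ≤ Real.sqrt (2*((49/12)*(η*((1-η*β)^T*L + E/β)) + η*E)) := by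
      refine le_trans (abs_le_sqrt_KL bar (mu T) (fun y => (hbar0 y).le) hbars (hmu0 T) (hmus T))
        (Real.sqrt_le_sqrt ?_)
      linarith [hKLbarmu]
    have hPmuT : ∀ y, matVec P (mu T) y
        ≤ 1/2 + β*L + E + (1/2) * Real.sqrt (2*((49/12)*(η*((1-η*β)^T*L + E/β)) + η*E)) := by
      intro y
      have hd : matVec P (fun y' => mu T y' - bar y') y = matVec P (mu T) y - matVec P bar y :=
        matVec_sub P (mu T) bar y
      have habs := abs_matVec_le P hP0 hP1 (fun y' => mu T y' - bar y')
        (by rw [Finset.sum_sub_distrib, hmus T, hbars]; ring) y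
      rw [hd] at habs
      have hcomm : ∑ y', |mu T y' - bar y'| = ∑ y', |bar y' - mu T y'| :=
        Finset.sum_congr rfl fun y' _ => abs_sub_comm _ _
      rw [hcomm] at habs
      have h5 := (abs_le.mp habs).2
      linarith [hPbar y, hsq2, h5]
    have hDG2 : DualGap P (mu T)
        ≤ 2*β*L + 2*E + Real.sqrt (2*((49/12)*(η*((1-η*β)^T*L + E/β)) + η*E)) := by
      have h6 := dualGap_le P hPsum (mu T) ⟨fun y => (hmu0 T y).le, hmus T⟩ _ hPmuT
      linarith [h6]
    exact ⟨hDG1, hDG2⟩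
  -- limits and numerics
  have hEten : Filter.Tendsto (fun S : ℕ => (1-η*β)^S*L/η) Filter.atTop (nhds 0) := by
    have h := tendsto_pow_atTop_nhds_zero_of_lt_one hρ0.le hρ1
    have h2 := (h.mul_const L).div_const η
    simpa using h2
  have hβL : 2*β*L = ε/2 := by
    rw [hβdef]
    field_simp
    ring
  have hX0 : 0 ≤ (1-η*β)^T*L := mul_nonneg (pow_nonneg hρ0.le T) hL0.le
  have hTL : (8*L/ε + 12) * ((1-η*β)^T*L) ≤ ε/2 := by
    have e1 : 2/β = 8*L/ε := by
      rw [hβdef]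
      field_simp
      ring
    have e2 : 4/η = 4*β + 12 := by
      have hβ3 : β + 3 ≠ 0 := by positivity
      rw [hηdef]
      field_simp
      ring
    have e3 : (8*L/ε + 12) ≤ 2/β + 4/η := by
      rw [e1, e2]
      linarith
    calc (8*L/ε + 12) * ((1-η*β)^T*L) ≤ (2/β + 4/η) * ((1-η*β)^T*L) :=
        mul_le_mul_of_nonneg_right e3 hX0
      _ = (2/β + 4/η) * L * (1-η*β)^T := by ring
      _ ≤ ε/2 := hT
  have hTL2 : (8*L + 12*ε) * ((1-η*β)^T*L) ≤ ε^2/2 := by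
    have h7 := mul_le_mul_of_nonneg_right hTL hε.le
    have e9 : ((8*L/ε + 12) * ((1-η*β)^T*L)) * ε = (8*L + 12*ε) * ((1-η*β)^T*L) := by
      field_simp
    calc (8*L + 12*ε) * ((1-η*β)^T*L) = ((8*L/ε + 12) * ((1-η*β)^T*L)) * ε := e9.symm
      _ ≤ (ε/2)*ε := h7
      _ = ε^2/2 := by ring
  have hpos : (0:ℝ) < 8*L + 12*ε := by positivity
  have hnum1 : 2*β*L + Real.sqrt (2*((1-η*β)^T*L)) ≤ ε := by
    have h1 : 2*((1-η*β)^T*L) ≤ (ε/2)^2 := num1 L ε _ hL69 hε hX0 hTL2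
    have h2 : Real.sqrt (2*((1-η*β)^T*L)) ≤ ε/2 := by
      calc Real.sqrt (2*((1-η*β)^T*L)) ≤ Real.sqrt ((ε/2)^2) := Real.sqrt_le_sqrt h1
        _ = ε/2 := Real.sqrt_sq (by positivity)
    linarith
  have hnum2 : 2*β*L + Real.sqrt (2*((49/12)*(η*((1-η*β)^T*L)))) ≤ ε := by
    have h1 : 2*((49/12)*(η*((1-η*β)^T*L))) ≤ (ε/2)^2 :=
      num2 L ε _ η hL69 hε hX0 hη.le hη3 hTL2
    have h2 : Real.sqrt (2*((49/12)*(η*((1-η*β)^T*L)))) ≤ ε/2 := by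
      calc Real.sqrt (2*((49/12)*(η*((1-η*β)^T*L)))) ≤ Real.sqrt ((ε/2)^2) :=
          Real.sqrt_le_sqrt h1
        _ = ε/2 := Real.sqrt_sq (by positivity)
    linarith
  constructor
  · have hlim : Filter.Tendsto
        (fun S : ℕ => 2*β*L + 2*((1-η*β)^S*L/η)
          + Real.sqrt (2*((1-η*β)^T*L + ((1-η*β)^S*L/η)/β))) Filter.atTop
        (nhds (2*β*L + 2*(0:ℝ) + Real.sqrt (2*((1-η*β)^T*L + (0:ℝ)/β)))) := by
      refine Filter.Tendsto.add (Filter.Tendsto.add tendsto_const_nhds (hEten.const_mul 2)) ?_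
      exact (Real.continuous_sqrt.tendsto _).comp
        (((hEten.div_const β).const_add ((1-η*β)^T*L)).const_mul 2)
    have hev : ∀ᶠ S in Filter.atTop, DualGap P (pi T)
        ≤ 2*β*L + 2*((1-η*β)^S*L/η) + Real.sqrt (2*((1-η*β)^T*L + ((1-η*β)^S*L/η)/β)) :=
      Filter.eventually_atTop.mpr ⟨1, fun S hS => (main S hS).1⟩
    have h8 := ge_of_tendsto hlim hev
    simp only [mul_zero, zero_div, add_zero] at h8
    exact h8.trans hnum1
  · have hlim : Filter.Tendsto
        (fun S : ℕ => 2*β*L + 2*((1-η*β)^S*L/η)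
          + Real.sqrt (2*((49/12)*(η*((1-η*β)^T*L + ((1-η*β)^S*L/η)/β)) + η*((1-η*β)^S*L/η))))
        Filter.atTop
        (nhds (2*β*L + 2*(0:ℝ)
          + Real.sqrt (2*((49/12)*(η*((1-η*β)^T*L + (0:ℝ)/β)) + η*(0:ℝ))))) := by
      refine Filter.Tendsto.add (Filter.Tendsto.add tendsto_const_nhds (hEten.const_mul 2)) ?_
      refine (Real.continuous_sqrt.tendsto _).comp ?_
      refine Filter.Tendsto.const_mul 2 ?_
      exact Filter.Tendsto.add
        ((((hEten.div_const β).const_add ((1-η*β)^T*L)).const_mul η).const_mul ((49:ℝ)/12))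
        (hEten.const_mul η)
    have hev : ∀ᶠ S in Filter.atTop, DualGap P (mu T)
        ≤ 2*β*L + 2*((1-η*β)^S*L/η)
          + Real.sqrt (2*((49/12)*(η*((1-η*β)^T*L + ((1-η*β)^S*L/η)/β)) + η*((1-η*β)^S*L/η))) :=
      Filter.eventually_atTop.mpr ⟨1, fun S hS => (main S hS).2⟩
    have h8 := ge_of_tendsto hlim hev
    simp only [mul_zero, zero_div, add_zero] at h8
    exact h8.trans hnum2

end EGPOaux

set_option maxHeartbeats 1000000 in
/-- run exact EGPO with `π^{(0)} = π_ref = Uniform(Y)`, `β = ε/(4 log|Y|)`,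
`η = 1/(β+3)`.  Then for every `T` with `(2/β + 4/η) · log|Y| · (1 − ηβ)^T ≤ ε/2`, both
`DualGap(π^{(T)}) ≤ ε` and `DualGap(π^{(T+1/2)}) ≤ ε`. -/
theorem egpo_exact_unregularized_nash
    {Y : Type*} [Fintype Y] (hY : 2 ≤ Fintype.card Y)
    (P : Y → Y → ℝ)
    (hP0 : ∀ y y', 0 ≤ P y y') (hP1 : ∀ y y', P y y' ≤ 1)
    (hPsum : ∀ y y', P y y' + P y' y = 1)
    (ε : ℝ) (hε : 0 < ε)
    (β : ℝ) (hβdef : β = ε / (4 * Real.log (Fintype.card Y)))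
    (η : ℝ) (hηdef : η = 1 / (β + 3))
    (θref : Y → ℝ) (href : softmax θref = fun _ => (Fintype.card Y : ℝ)⁻¹)
    (θ θhalf : ℕ → Y → ℝ)
    (h0 : softmax (θ 0) = fun _ => (Fintype.card Y : ℝ)⁻¹)
    (hhalf : ∀ t, θhalf t = fun y =>
      (1 - η * β) * θ t y + η * β * (θref y + matVec P (softmax (θ t)) y / β))
    (hstep : ∀ t, θ (t + 1) = fun y =>
      (1 - η * β) * θ t y + η * β * (θref y + matVec P (softmax (θhalf t)) y / β))
    (T : ℕ)
    (hT : (2 / β + 4 / η) * Real.log (Fintype.card Y) * (1 - η * β) ^ T ≤ ε / 2) :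
    DualGap P (softmax (θ T)) ≤ ε ∧ DualGap P (softmax (θhalf T)) ≤ ε := by
  have hNY : Nonempty Y := Fintype.card_pos_iff.mp (by omega)
  have hN2 : (2:ℝ) ≤ (Fintype.card Y : ℝ) := by exact_mod_cast hY
  have hL0 : 0 < Real.log (Fintype.card Y) := Real.log_pos (by linarith)
  have hβ : 0 < β := by rw [hβdef]; positivity
  have hrefu : ∀ y : Y, Real.log ((Fintype.card Y : ℝ)⁻¹)
      = θref y - Real.log (∑ y', Real.exp (θref y')) := by
    intro y
    have h1 : softmax θref y = (Fintype.card Y : ℝ)⁻¹ := by rw [href]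
    rw [← h1]
    exact EGPOaux.log_softmax θref y
  refine EGPOaux.main_aux hY P hP0 hP1 hPsum ε hε β hβdef η hηdef
    (fun t => softmax (θ t)) (fun t => softmax (θhalf t))
    (fun t y => EGPOaux.softmax_pos _ _) (fun t => EGPOaux.softmax_sum _)
    (fun t y => EGPOaux.softmax_pos _ _) (fun t => EGPOaux.softmax_sum _)
    h0 ?_ ?_ T hT
  · intro t
    refine ⟨(1-η*β) * Real.log (∑ y', Real.exp (θ t y'))
      + (η*β) * Real.log (∑ y', Real.exp (θref y'))
      - Real.log (∑ y', Real.exp (θhalf t y')), fun y => ?_⟩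
    have h1 := EGPOaux.log_softmax (θhalf t) y
    have h2 := EGPOaux.log_softmax (θ t) y
    have h3 := hrefu y
    have h4 : θhalf t y
        = (1 - η * β) * θ t y + η * β * (θref y + matVec P (softmax (θ t)) y / β) := by
      rw [hhalf t]
    have h5 : η * β * (matVec P (softmax (θ t)) y / β) = η * matVec P (softmax (θ t)) y := by
      field_simp [hβ.ne']
    linear_combination h1 + h4 + h5 - (1-η*β)*h2 - (η*β)*h3
  · intro t
    refine ⟨(1-η*β) * Real.log (∑ y', Real.exp (θ t y'))
      + (η*β) * Real.log (∑ y', Real.exp (θref y'))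
      - Real.log (∑ y', Real.exp (θ (t+1) y')), fun y => ?_⟩
    have h1 := EGPOaux.log_softmax (θ (t+1)) y
    have h2 := EGPOaux.log_softmax (θ t) y
    have h3 := hrefu y
    have h4 : θ (t+1) y
        = (1 - η * β) * θ t y + η * β * (θref y + matVec P (softmax (θhalf t)) y / β) := by
      rw [hstep t]
    have h5 : η * β * (matVec P (softmax (θhalf t)) y / β)
        = η * matVec P (softmax (θhalf t)) y := by
      field_simp [hβ.ne']
    linear_combination h1 + h4 + h5 - (1-η*β)*h2 - (η*β)*h3
end
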